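/- There exists a bijection between plane trees with n edges and 2-Motzkin paths of length n-1 that maps a tree with i old leaves and j young leaves to a path with i-1 up steps and j red horizontal steps. -/

import Mathlib

/-- A plane tree: a root together with an ordered (possibly empty) list of subtrees. -/
inductive PlaneTree where
  | node : List PlaneTree → PlaneTree

namespace PlaneTree

/-- The number of edges of a plane tree. -/
def edges : PlaneTree → ℕ
  | node ts => (ts.attach.map (fun t => edges t.1 + 1)).sum
decreasing_by have := List.sizeOf_lt_of_mem t.2; simp at *; omega

/-- Indicator that a tree is a single vertex (i.e. the corresponding child is a leaf). -/
def isLeafInd : PlaneTree → ℕ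
  | node [] => 1
  | node (_ :: _) => 0

/-- The number of old leaves: leaves that are the leftmost child of their parent. -/
def oldLeaves : PlaneTree → ℕ
  | node [] => 0
  | node (t :: ts) =>
      isLeafInd t + oldLeaves t + (ts.attach.map (fun s => oldLeaves s.1)).sum
decreasing_by
  · simp; omega
  · have := List.sizeOf_lt_of_mem s.2; simp at *; omega

/-- The number of young leaves: leaves that are not the leftmost child of their parent. -/
def youngLeaves : PlaneTree → ℕ
  | node [] => 0
  | node (t :: ts) =>
      youngLeaves t + (ts.attach.map (fun s => isLeafInd s.1 + youngLeaves s.1)).sum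
decreasing_by
  · simp; omega
  · have := List.sizeOf_lt_of_mem s.2; simp at *; omega

end PlaneTree

/-- Steps of a 2-Motzkin path: up, down, red horizontal, blue horizontal. -/
inductive Step2 where
  | up : Step2
  | down : Step2
  | red : Step2
  | blue : Step2
deriving DecidableEq

/-- The height change of a step. -/
def Step2.h : Step2 → ℤ
  | .up => 1
  | .down => -1
  | .red => 0
  | .blue => 0

/-- A list of steps is a 2-Motzkin path if it ends at height 0 and
no prefix goes below the x-axis. -/
def IsTwoMotzkin (p : List Step2) : Prop :=
  (p.map Step2.h).sum = 0 ∧ ∀ q : List Step2, q <+: p → 0 ≤ (q.map Step2.h).sum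


section Aux

open PlaneTree

/-- Strong induction for plane trees. -/
lemma PlaneTree.ind (P : PlaneTree → Prop)
    (h : ∀ cs : List PlaneTree, (∀ t ∈ cs, P t) → P (.node cs)) : ∀ T, P T := by
  have key : ∀ N (T : PlaneTree), sizeOf T ≤ N → P T := by
    intro N
    induction N with
    | zero => intro T hT; obtain ⟨cs⟩ := T; simp at hT
    | succ N ih =>
      intro T hT
      obtain ⟨cs⟩ := T
      refine h cs (fun t ht => ih t ?_)
      have := List.sizeOf_lt_of_mem ht
      simp at hT
      omega
  exact fun T => key (sizeOf T) T le_rfl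

lemma attach_map_join {α : Type*} (l : List PlaneTree) (f : PlaneTree → List α) :
    (l.attach.map (fun s => f s.1)) = l.map f := by
  simp

lemma edges_node (ts : List PlaneTree) :
    edges (.node ts) = (ts.map (fun t => edges t + 1)).sum := by
  rw [edges]
  congr 1
  simp

lemma oldLeaves_nil : oldLeaves (.node []) = 0 := by rw [oldLeaves]

lemma oldLeaves_cons (t : PlaneTree) (ts : List PlaneTree) :
    oldLeaves (.node (t :: ts)) = isLeafInd t + oldLeaves t + (ts.map oldLeaves).sum := by
  rw [oldLeaves]
  congr 1
  simp

lemma youngLeaves_nil : youngLeaves (.node []) = 0 := by rw [youngLeaves]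

lemma youngLeaves_cons (t : PlaneTree) (ts : List PlaneTree) :
    youngLeaves (.node (t :: ts))
      = youngLeaves t + (ts.map (fun s => isLeafInd s + youngLeaves s)).sum := by
  rw [youngLeaves]
  congr 1
  simp

def isLeafB : PlaneTree → Bool
  | .node [] => true
  | .node (_ :: _) => false

lemma isLeafB_iff (t : PlaneTree) : isLeafB t = true ↔ t = .node [] := by
  obtain ⟨_ | _⟩ := t <;> simp [isLeafB]

lemma isLeafInd_eq (t : PlaneTree) : isLeafInd t = if isLeafB t then 1 else 0 := by
  obtain ⟨_ | _⟩ := t <;> simp [isLeafInd, isLeafB]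

def toPath : PlaneTree → List Step2
  | .node [] => []
  | .node (c :: cs) =>
      (cs.attach.map (fun s => if isLeafB s.1 then [Step2.red]
          else Step2.up :: (toPath s.1 ++ [Step2.down]))).flatten
      ++ (if isLeafB c then [] else Step2.blue :: toPath c)
decreasing_by
  · have := List.sizeOf_lt_of_mem s.2; simp at *; omega
  · simp; omega

def blockp (s : PlaneTree) : List Step2 :=
  if isLeafB s then [Step2.red] else Step2.up :: (toPath s ++ [Step2.down])

def tailp (c : PlaneTree) : List Step2 :=
  if isLeafB c then [] else Step2.blue :: toPath c

def blocks : List PlaneTree → List Step2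
  | [] => []
  | s :: ss => blockp s ++ blocks ss

lemma toPath_cons (c : PlaneTree) (cs : List PlaneTree) :
    toPath (.node (c :: cs)) = blocks cs ++ tailp c := by
  rw [toPath, tailp]
  congr 1
  rw [show (fun (s : {x // x ∈ cs}) => if isLeafB s.1 then [Step2.red]
          else Step2.up :: (toPath s.1 ++ [Step2.down])) = fun s => blockp s.1 from rfl]
  rw [attach_map_join]
  induction cs with
  | nil => simp [blocks]
  | cons s ss ih => simp [blocks, ih]

lemma motzkin_nil : IsTwoMotzkin [] := by
  constructor
  · simp
  · intro q hq; simp [List.prefix_nil.mp hq]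

lemma prefix_append_cases {α : Type*} {r p q : List α} (h : r <+: p ++ q) :
    r <+: p ∨ ∃ r', r = p ++ r' ∧ r' <+: q := by
  rcases le_or_gt r.length p.length with hl | hl
  · exact Or.inl (List.prefix_of_prefix_length_le h (List.prefix_append p q) hl)
  · right
    have hp : p <+: r := List.prefix_of_prefix_length_le (List.prefix_append p q) h hl.le
    obtain ⟨r', rfl⟩ := hp
    exact ⟨r', rfl, (List.prefix_append_right_inj p).mp h⟩

lemma motzkin_append {p q : List Step2} (hp : IsTwoMotzkin p) (hq : IsTwoMotzkin q) :
    IsTwoMotzkin (p ++ q) := by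
  constructor
  · simp [hp.1, hq.1]
  · intro r hr
    rcases prefix_append_cases hr with h | ⟨r', rfl, hr'⟩
    · exact hp.2 r h
    · simpa [hp.1] using hq.2 r' hr'

lemma motzkin_flat_cons {x : Step2} (hx : Step2.h x = 0) {p : List Step2}
    (hp : IsTwoMotzkin p) : IsTwoMotzkin (x :: p) := by
  constructor
  · simp [hx, hp.1]
  · intro q hq
    rcases q with _ | ⟨y, q⟩
    · simp
    · obtain ⟨rfl, hq'⟩ := List.cons_prefix_cons.mp hq
      simpa [hx] using hp.2 q hq'

lemma motzkin_wrap {p : List Step2} (hp : IsTwoMotzkin p) :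
    IsTwoMotzkin (Step2.up :: (p ++ [Step2.down])) := by
  constructor
  · simp [hp.1, Step2.h]
  · intro q hq
    rcases q with _ | ⟨y, q⟩
    · simp
    · obtain ⟨rfl, hq'⟩ := List.cons_prefix_cons.mp hq
      rcases prefix_append_cases hq' with h | ⟨r', rfl, hr'⟩
      · have := hp.2 q h
        simp [Step2.h]; omega
      · have h1 : r' = [] ∨ r' = [Step2.down] := by
          obtain ⟨t, ht⟩ := hr'
          rcases r' with _ | ⟨y, r''⟩
          · exact Or.inl rfl
          · right
            simp only [List.cons_append, List.cons.injEq] at ht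
            obtain ⟨rfl, ht⟩ := ht
            have : r'' = [] := by
              rcases r'' with _ | _
              · rfl
              · simp at ht
            simp [this]
        rcases h1 with rfl | rfl <;> simp [Step2.h, hp.1]

lemma h_ge : ∀ x : Step2, -1 ≤ Step2.h x := by intro x; cases x <;> simp [Step2.h]

lemma split_exists {p : List Step2} (hp : IsTwoMotzkin (Step2.up :: p)) :
    ∃ q r, p = q ++ Step2.down :: r ∧ IsTwoMotzkin q ∧ IsTwoMotzkin r ∧
      q.length < p.length ∧ r.length < p.length := by
  classical
  set L := p.map Step2.h with hL
  have hsum : L.sum = -1 := by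
    have := hp.1; simp [Step2.h, hL] at this ⊢; omega
  have hex : ∃ k, (L.take k).sum < 0 := ⟨L.length, by simp [hsum]⟩
  obtain ⟨k, hks, hkmin⟩ : ∃ k, (L.take k).sum < 0 ∧ ∀ j, j < k → 0 ≤ (L.take j).sum :=
    ⟨Nat.find hex, Nat.find_spec hex, fun j hj => by
      have := Nat.find_min hex hj; omega⟩
  have hk1 : 1 ≤ k := by
    by_contra h
    have hk0 : k = 0 := by omega
    rw [hk0] at hks; simp at hks
  have hklen : k ≤ L.length := by
    by_contra h
    have := hkmin L.length (by omega)
    simp [hsum] at this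
  have hLlen : L.length = p.length := by simp [hL]
  have hidx : k - 1 < p.length := by omega
  have hidxL : k - 1 < L.length := by omega
  have hstep : (L.take k).sum = (L.take (k-1)).sum + L[k-1] := by
    have := List.sum_take_succ L (k-1) hidxL
    have hkk : k - 1 + 1 = k := by omega
    rw [hkk] at this
    exact this
  have hgetL : L[k-1] = Step2.h (p[k-1]) := by simp [hL]
  have hprev : 0 ≤ (L.take (k-1)).sum := hkmin (k-1) (by omega)
  have hdown : p[k-1] = Step2.down := by
    rcases he : p[k-1] <;> rw [he] at hgetL <;> simp [Step2.h] at hgetL <;>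
      rw [hgetL] at hstep <;> omega
  have hprev0 : (L.take (k-1)).sum = 0 := by
    rw [hgetL, hdown] at hstep; simp [Step2.h] at hstep; omega
  have hkval : (L.take k).sum = -1 := by
    rw [hstep, hgetL, hdown, hprev0]; simp [Step2.h]
  have htake : ∀ j, ((p.take j).map Step2.h).sum = (L.take j).sum := by
    intro j; rw [hL, List.map_take]
  have hdropS : ((p.drop k).map Step2.h).sum = (L.drop k).sum := by
    rw [hL, List.map_drop]
  refine ⟨p.take (k-1), p.drop k, ?_, ?_, ?_, ?_, ?_⟩
  · conv_lhs => rw [← List.take_append_drop (k-1) p]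
    congr 1
    rw [List.drop_eq_getElem_cons hidx, hdown]
    have hkk : k - 1 + 1 = k := by omega
    rw [hkk]
  · constructor
    · rw [htake]; exact hprev0
    · intro q hq
      have hqp : q <+: p := hq.trans (List.take_prefix _ _)
      have hqtake : q = p.take q.length := List.prefix_iff_eq_take.mp hqp
      have hqlen := hq.length_le
      rw [List.length_take] at hqlen
      rw [hqtake, htake]
      refine hkmin q.length ?_
      omega
  · constructor
    · have hsplit : L.sum = (L.take k).sum + (L.drop k).sum := by
        rw [← List.sum_append, List.take_append_drop]
      rw [hdropS]; omega
    · intro q hq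
      have hpre : Step2.up :: (p.take k ++ q) <+: Step2.up :: p := by
        rw [List.cons_prefix_cons]
        refine ⟨rfl, ?_⟩
        conv_rhs => rw [← List.take_append_drop k p]
        exact (List.prefix_append_right_inj _).mpr hq
      have h2 := hp.2 _ hpre
      simp only [List.map_cons, List.map_append, List.sum_cons, List.sum_append] at h2
      rw [htake] at h2
      simp [Step2.h, hkval] at h2
      omega
  · rw [List.length_take]; omega
  · rw [List.length_drop]; omega

lemma split_unique {q1 r1 q2 r2 : List Step2} (h1 : IsTwoMotzkin q1) (h2 : IsTwoMotzkin q2)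
    (he : q1 ++ Step2.down :: r1 = q2 ++ Step2.down :: r2) : q1 = q2 ∧ r1 = r2 := by
  have key : ∀ a1 b1 a2 b2 : List Step2, IsTwoMotzkin a1 → IsTwoMotzkin a2 →
      a1 ++ Step2.down :: b1 = a2 ++ Step2.down :: b2 → ¬ a1.length < a2.length := by
    intro a1 b1 a2 b2 ha1 ha2 heq hlt
    have hpre : a1 ++ [Step2.down] <+: a2 := by
      have h1' : a1 ++ [Step2.down] <+: a2 ++ Step2.down :: b2 := by
        rw [← heq]; exact ⟨b1, by simp⟩
      exact List.prefix_of_prefix_length_le h1' (List.prefix_append _ _) (by simp; omega)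
    have := ha2.2 _ hpre
    simp [Step2.h, ha1.1] at this
  have hlen : q1.length = q2.length := by
    rcases lt_trichotomy q1.length q2.length with h | h | h
    · exact absurd h (key _ _ _ _ h1 h2 he)
    · exact h
    · exact absurd h (key _ _ _ _ h2 h1 he.symm)
  obtain ⟨h3, h4⟩ := List.append_inj he hlen
  exact ⟨h3, by simpa using h4⟩

lemma toPath_nil : toPath (.node []) = [] := by rw [toPath]

lemma edges_nil : edges (.node []) = 0 := by rw [edges_node]; simp

lemma blockp_stats {s : PlaneTree}
    (hs : (toPath s).length + 1 = edges s + isLeafInd s ∧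
      (toPath s).count Step2.up + 1 = oldLeaves s + isLeafInd s ∧
      (toPath s).count Step2.red = youngLeaves s ∧ IsTwoMotzkin (toPath s)) :
    (blockp s).length = edges s + 1 ∧
    (blockp s).count Step2.up = oldLeaves s ∧
    (blockp s).count Step2.red = isLeafInd s + youngLeaves s ∧
    IsTwoMotzkin (blockp s) := by
  obtain ⟨h1, h2, h3, h4⟩ := hs
  by_cases hl : isLeafB s
  · have hs0 : s = .node [] := (isLeafB_iff s).mp hl
    subst hs0
    rw [blockp]
    simp [isLeafB, edges_nil, oldLeaves_nil, youngLeaves_nil, isLeafInd]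
    exact motzkin_flat_cons (by simp [Step2.h]) motzkin_nil
  · have hInd : isLeafInd s = 0 := by rw [isLeafInd_eq, if_neg hl]
    rw [hInd] at h1 h2
    rw [blockp, if_neg hl]
    refine ⟨by simp; omega, by simp [List.count_cons, List.count_append]; omega,
      by simp [List.count_cons, List.count_append, hInd, h3], motzkin_wrap h4⟩

lemma tailp_stats {c : PlaneTree}
    (hs : (toPath c).length + 1 = edges c + isLeafInd c ∧
      (toPath c).count Step2.up + 1 = oldLeaves c + isLeafInd c ∧
      (toPath c).count Step2.red = youngLeaves c ∧ IsTwoMotzkin (toPath c)) :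
    (tailp c).length = edges c ∧
    (tailp c).count Step2.up + 1 = oldLeaves c + isLeafInd c ∧
    (tailp c).count Step2.red = youngLeaves c ∧
    IsTwoMotzkin (tailp c) := by
  obtain ⟨h1, h2, h3, h4⟩ := hs
  by_cases hl : isLeafB c
  · have hc0 : c = .node [] := (isLeafB_iff c).mp hl
    subst hc0
    rw [tailp]
    simp [isLeafB, edges_nil, oldLeaves_nil, youngLeaves_nil, isLeafInd]
    exact motzkin_nil
  · have hInd : isLeafInd c = 0 := by rw [isLeafInd_eq, if_neg hl]
    rw [hInd] at h1 h2
    rw [tailp, if_neg hl]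
    refine ⟨by simp; omega, by simp [List.count_cons, hInd]; omega,
      by simpa [List.count_cons] using h3, motzkin_flat_cons (by simp [Step2.h]) h4⟩

/-- Main statistics lemma. -/
lemma main_stats : ∀ T : PlaneTree,
    (toPath T).length + 1 = edges T + isLeafInd T ∧
    (toPath T).count Step2.up + 1 = oldLeaves T + isLeafInd T ∧
    (toPath T).count Step2.red = youngLeaves T ∧
    IsTwoMotzkin (toPath T) := by
  refine PlaneTree.ind _ ?_
  intro cs H
  rcases cs with _ | ⟨c, cs⟩
  · rw [toPath_nil]
    refine ⟨by simp [edges_nil, isLeafInd], by simp [oldLeaves_nil, isLeafInd],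
      by simp [youngLeaves_nil], motzkin_nil⟩
  · have hblocks : ∀ ss : List PlaneTree, (∀ t ∈ ss, t ∈ cs) →
        (blocks ss).length = (ss.map (fun t => edges t + 1)).sum ∧
        (blocks ss).count Step2.up = (ss.map oldLeaves).sum ∧
        (blocks ss).count Step2.red = (ss.map (fun t => isLeafInd t + youngLeaves t)).sum ∧
        IsTwoMotzkin (blocks ss) := by
      intro ss
      induction ss with
      | nil => intro _; refine ⟨by simp [blocks], by simp [blocks], by simp [blocks],
          by rw [blocks]; exact motzkin_nil⟩
      | cons t ts ih =>
        intro hmem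
        have hbt := blockp_stats (H t (by simp [hmem t (by simp)]))
        have hts := ih (fun u hu => hmem u (by simp [hu]))
        rw [blocks]
        refine ⟨?_, ?_, ?_, motzkin_append hbt.2.2.2 hts.2.2.2⟩
        · simp [hbt.1, hts.1]
        · simp [List.count_append, hbt.2.1, hts.2.1]
        · simp [List.count_append, hbt.2.2.1, hts.2.2.1]
    have hcs := hblocks cs (fun t ht => ht)
    have htc := tailp_stats (H c (by simp))
    rw [toPath_cons]
    have hInd : isLeafInd (PlaneTree.node (c :: cs)) = 0 := rfl
    rw [hInd]
    refine ⟨?_, ?_, ?_, motzkin_append hcs.2.2.2 htc.2.2.2⟩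
    · rw [edges_node]
      simp only [List.length_append, List.map_cons, List.sum_cons, hcs.1, htc.1]
      omega
    · rw [oldLeaves_cons]
      simp only [List.count_append, hcs.2.1, htc.2.1]
      omega
    · rw [youngLeaves_cons]
      simp only [List.count_append, hcs.2.2.1, htc.2.2.1]
      omega

lemma isLeafB_false_iff (t : PlaneTree) : isLeafB t = false ↔ t ≠ .node [] := by
  rw [ne_eq, ← isLeafB_iff t]
  simp

lemma exists_cons_of_ne {T : PlaneTree} (h : T ≠ .node []) :
    ∃ c cs, T = .node (c :: cs) := by
  obtain ⟨_ | ⟨c, cs⟩⟩ := T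
  · exact absurd rfl h
  · exact ⟨c, cs, rfl⟩

lemma inv_nil {c : PlaneTree} {cs : List PlaneTree}
    (h : blocks cs ++ tailp c = []) : cs = [] ∧ c = .node [] := by
  rcases cs with _ | ⟨s, ss⟩
  · rw [blocks] at h
    simp only [List.nil_append] at h
    rw [tailp] at h
    split at h
    · exact ⟨rfl, (isLeafB_iff c).mp (by assumption)⟩
    · simp at h
  · rw [blocks, blockp] at h
    split at h <;> simp at h

lemma inv_blue {c : PlaneTree} {cs : List PlaneTree} {t : List Step2}
    (h : blocks cs ++ tailp c = Step2.blue :: t) :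
    cs = [] ∧ isLeafB c = false ∧ toPath c = t := by
  rcases cs with _ | ⟨s, ss⟩
  · rw [blocks] at h
    simp only [List.nil_append] at h
    rw [tailp] at h
    split at h
    · simp at h
    · simp only [List.cons.injEq] at h
      exact ⟨rfl, by rename_i hl; simpa using hl, h.2⟩
  · rw [blocks, blockp] at h
    split at h <;> simp at h

lemma inv_red {c : PlaneTree} {cs : List PlaneTree} {t : List Step2}
    (h : blocks cs ++ tailp c = Step2.red :: t) :
    ∃ ss, cs = .node [] :: ss ∧ blocks ss ++ tailp c = t := by
  rcases cs with _ | ⟨s, ss⟩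
  · rw [blocks] at h
    simp only [List.nil_append] at h
    rw [tailp] at h
    split at h <;> simp at h
  · rw [blocks, blockp] at h
    split at h
    · rename_i hl
      simp only [List.cons_append, List.nil_append, List.cons.injEq] at h
      exact ⟨ss, by rw [(isLeafB_iff s).mp hl], h.2⟩
    · simp at h

lemma inv_up {c : PlaneTree} {cs : List PlaneTree} {t : List Step2}
    (h : blocks cs ++ tailp c = Step2.up :: t) :
    ∃ s ss, cs = s :: ss ∧ isLeafB s = false ∧
      t = toPath s ++ Step2.down :: (blocks ss ++ tailp c) := by
  rcases cs with _ | ⟨s, ss⟩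
  · rw [blocks] at h
    simp only [List.nil_append] at h
    rw [tailp] at h
    split at h <;> simp at h
  · rw [blocks, blockp] at h
    split at h
    · simp at h
    · rename_i hl
      simp only [List.cons_append, List.cons.injEq] at h
      refine ⟨s, ss, rfl, by simpa using hl, ?_⟩
      rw [← h.2]
      simp

lemma motzkin_head_ne_down {t : List Step2} (h : IsTwoMotzkin (Step2.down :: t)) : False := by
  have := h.2 [Step2.down] ⟨t, rfl⟩
  simp [Step2.h] at this

lemma toPath_inj : ∀ (N : ℕ) (p : List Step2), p.length ≤ N →
    ∀ T1 T2 : PlaneTree, T1 ≠ .node [] → T2 ≠ .node [] →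
    toPath T1 = p → toPath T2 = p → T1 = T2 := by
  intro N
  induction N with
  | zero =>
    intro p hp T1 T2 h1 h2 e1 e2
    obtain ⟨c1, cs1, rfl⟩ := exists_cons_of_ne h1
    obtain ⟨c2, cs2, rfl⟩ := exists_cons_of_ne h2
    have hpnil : p = [] := List.length_eq_zero_iff.mp (by omega)
    subst hpnil
    rw [toPath_cons] at e1 e2
    obtain ⟨ha, hb⟩ := inv_nil e1
    obtain ⟨hc, hd⟩ := inv_nil e2
    rw [ha, hb, hc, hd]
  | succ N ih =>
    intro p hp T1 T2 h1 h2 e1 e2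
    obtain ⟨c1, cs1, rfl⟩ := exists_cons_of_ne h1
    obtain ⟨c2, cs2, rfl⟩ := exists_cons_of_ne h2
    have hm1 : IsTwoMotzkin p := by rw [← e1]; exact (main_stats _).2.2.2
    rw [toPath_cons] at e1 e2
    rcases p with _ | ⟨x, t⟩
    · obtain ⟨ha, hb⟩ := inv_nil e1
      obtain ⟨hc, hd⟩ := inv_nil e2
      rw [ha, hb, hc, hd]
    · cases x with
      | down => exact absurd hm1 (fun h => motzkin_head_ne_down h)
      | blue =>
        obtain ⟨ha, hb, hc⟩ := inv_blue e1
        obtain ⟨hd, he, hf⟩ := inv_blue e2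
        have : c1 = c2 := by
          refine ih t (by simp at hp; omega) c1 c2 ?_ ?_ hc hf
          · exact (isLeafB_false_iff c1).mp hb
          · exact (isLeafB_false_iff c2).mp he
        rw [ha, hd, this]
      | red =>
        obtain ⟨ss1, ha, hb⟩ := inv_red e1
        obtain ⟨ss2, hc, hd⟩ := inv_red e2
        rw [← toPath_cons] at hb hd
        have : PlaneTree.node (c1 :: ss1) = PlaneTree.node (c2 :: ss2) := by
          refine ih t (by simp at hp; omega) _ _ (by simp) (by simp) hb hd
        simp only [PlaneTree.node.injEq, List.cons.injEq] at this
        rw [ha, hc, this.1, this.2]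
      | up =>
        obtain ⟨s1, ss1, ha, hb, hc⟩ := inv_up e1
        obtain ⟨s2, ss2, hd, he, hf⟩ := inv_up e2
        have hsplit := split_unique (main_stats s1).2.2.2 (main_stats s2).2.2.2
          (hc ▸ hf)
        have hlen1 : (toPath s1).length + (blocks ss1 ++ tailp c1).length + 1 = t.length := by
          rw [hc]; simp; omega
        have hs : s1 = s2 := by
          refine ih (toPath s1) (by simp at hp; omega) s1 s2
            ((isLeafB_false_iff s1).mp hb) ((isLeafB_false_iff s2).mp he) rfl hsplit.1.symm
        have hrest : PlaneTree.node (c1 :: ss1) = PlaneTree.node (c2 :: ss2) := by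
          refine ih (blocks ss1 ++ tailp c1) (by simp at hp; omega) _ _
            (by simp) (by simp) (toPath_cons c1 ss1) ?_
          rw [toPath_cons c2 ss2, ← hsplit.2]
        simp only [PlaneTree.node.injEq, List.cons.injEq] at hrest
        rw [ha, hd, hs, hrest.1, hrest.2]

lemma toPath_surj : ∀ (N : ℕ) (p : List Step2), p.length ≤ N → IsTwoMotzkin p →
    ∃ T : PlaneTree, T ≠ .node [] ∧ toPath T = p := by
  intro N
  induction N with
  | zero =>
    intro p hp _
    have hpnil : p = [] := List.length_eq_zero_iff.mp (by omega)
    subst hpnil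
    refine ⟨.node [.node []], by simp, ?_⟩
    rw [toPath_cons, blocks, tailp]
    simp [isLeafB]
  | succ N ih =>
    intro p hp hm
    rcases p with _ | ⟨x, t⟩
    · refine ⟨.node [.node []], by simp, ?_⟩
      rw [toPath_cons, blocks, tailp]
      simp [isLeafB]
    · have hmt : Step2.h x = 0 → IsTwoMotzkin t := by
        intro hx
        constructor
        · have := hm.1; simp [hx] at this; exact this
        · intro q hq
          have := hm.2 (x :: q) (List.cons_prefix_cons.mpr ⟨rfl, hq⟩)
          simpa [hx] using this
      cases x with
      | down => exact absurd hm (fun h => motzkin_head_ne_down h)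
      | red =>
        obtain ⟨T', hT', e⟩ := ih t (by simp at hp; omega) (hmt (by simp [Step2.h]))
        obtain ⟨c, cs, rfl⟩ := exists_cons_of_ne hT'
        refine ⟨.node (c :: .node [] :: cs), by simp, ?_⟩
        rw [toPath_cons, blocks, blockp]
        rw [toPath_cons] at e
        simp [isLeafB, e]
      | blue =>
        obtain ⟨T', hT', e⟩ := ih t (by simp at hp; omega) (hmt (by simp [Step2.h]))
        refine ⟨.node [T'], by simp, ?_⟩
        rw [toPath_cons, blocks, tailp, if_neg (by simp [(isLeafB_false_iff T').mpr hT'])]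
        simp [e]
      | up =>
        obtain ⟨q, r, rfl, hq, hr, hql, hrl⟩ := split_exists hm
        obtain ⟨Tq, hTq, eq⟩ := ih q (by simp at hp; omega) hq
        obtain ⟨Tr, hTr, er⟩ := ih r (by simp at hp; omega) hr
        obtain ⟨c, cs, rfl⟩ := exists_cons_of_ne hTr
        refine ⟨.node (c :: Tq :: cs), by simp, ?_⟩
        rw [toPath_cons, blocks, blockp, if_neg (by simp [(isLeafB_false_iff Tq).mpr hTq])]
        rw [toPath_cons] at er
        simp [eq, er]

end Aux

/-- There is a bijection between plane trees with `n` edges and 2-Motzkin paths of length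
`n-1` mapping a tree with `i` old leaves and `j` young leaves to a path with `i-1` up steps
and `j` red horizontal steps. -/
theorem exists_bijection_trees_twoMotzkin (n : ℕ) (hn : 1 ≤ n) :
    ∃ f : {T : PlaneTree // T.edges = n} →
          {p : List Step2 // p.length = n - 1 ∧ IsTwoMotzkin p},
      Function.Bijective f ∧
      ∀ T : {T : PlaneTree // T.edges = n},
        (f T).1.count Step2.up + 1 = T.1.oldLeaves ∧
        (f T).1.count Step2.red = T.1.youngLeaves := by
  have hne : ∀ T : PlaneTree, T.edges = n → T ≠ .node [] := by
    intro T hT h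
    subst h
    rw [edges_nil] at hT
    omega
  have hind : ∀ T : PlaneTree, T ≠ .node [] → T.isLeafInd = 0 := by
    intro T h
    obtain ⟨c, cs, rfl⟩ := exists_cons_of_ne h
    rfl
  have hlen : ∀ T : PlaneTree, T.edges = n → (toPath T).length = n - 1 := by
    intro T hT
    have h := (main_stats T).1
    rw [hT, hind _ (hne _ hT)] at h
    omega
  refine ⟨fun T => ⟨toPath T.1, hlen T.1 T.2, (main_stats T.1).2.2.2⟩, ⟨?_, ?_⟩, ?_⟩
  · intro T1 T2 h
    simp only [Subtype.mk.injEq] at h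
    exact Subtype.ext (toPath_inj (toPath T1.1).length _ le_rfl _ _
      (hne _ T1.2) (hne _ T2.2) rfl h.symm)
  · rintro ⟨p, hplen, hpm⟩
    obtain ⟨T, hT, e⟩ := toPath_surj p.length p le_rfl hpm
    have hTe : T.edges = n := by
      have h := (main_stats T).1
      rw [hind _ hT, e, hplen] at h
      omega
    exact ⟨⟨T, hTe⟩, Subtype.ext e⟩
  · intro T
    have h2 := (main_stats T.1).2.1
    rw [hind _ (hne _ T.2)] at h2
    exact ⟨by simpa using h2, (main_stats T.1).2.2.1⟩
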